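/- Fix μ ∈ ℝ. Let k_μ(ξ,ζ) be defined for each ζ > 0 by the equation ∫_{−∞}^{k_μ(ξ,ζ)} e^{μx} exp(−cosh(x)/ζ) dx = ∫_ξ^{∞} e^{μx} exp(−cosh(x)/ζ) dx, ξ ∈ ℝ, and define the path transformation S_μ : C([0,t];ℝ) → C([0,t];ℝ) by S_μ(φ)(s) := T_{φ_t + k_μ(φ_t, Z_t(φ))}(φ)(s), 0 ≤ s ≤ t. Then S_μ ∘ S_{−μ} = Id on C([0,t];ℝ). -/

import Mathlib

open MeasureTheory ProbabilityTheory Set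

/-- `A_s(φ) = ∫_0^s e^{2 φ_u} du`. -/
noncomputable def pA (φ : ℝ → ℝ) (s : ℝ) : ℝ := ∫ u in (0:ℝ)..s, Real.exp (2 * φ u)

/-- `Z_s(φ) = e^{-φ_s} A_s(φ)`. -/
noncomputable def pZ (φ : ℝ → ℝ) (s : ℝ) : ℝ := Real.exp (-(φ s)) * pA φ s

/-- The anticipative transformation `T_z` on paths over `[0,t]`:
`T_z(φ)(s) = φ_s - log(1 + (A_s(φ)/A_t(φ)) (e^z - 1))`. -/
noncomputable def pT (t z : ℝ) (φ : ℝ → ℝ) (s : ℝ) : ℝ :=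
  φ s - Real.log (1 + (pA φ s / pA φ t) * (Real.exp z - 1))

-- aux lemma 1: cosh lower bound
lemma my_sq_le_cosh (x : ℝ) : x ^ 2 / 8 ≤ Real.cosh x := by
  have key : ∀ y : ℝ, 0 ≤ y → y ^ 2 / 8 ≤ Real.cosh y := by
    intro y hy
    have h1 : y / 2 + 1 ≤ Real.exp (y / 2) := Real.add_one_le_exp _
    have h2 : Real.exp y = Real.exp (y / 2) * Real.exp (y / 2) := by
      rw [← Real.exp_add]; ring_nf
    have h3 := (Real.exp_pos (-y)).le
    rw [Real.cosh_eq]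
    nlinarith [mul_le_mul h1 h1 (by linarith) (Real.exp_pos (y / 2)).le]
  rcases le_total 0 x with h | h
  · exact key x h
  · have := key (-x) (by linarith)
    simpa using this

lemma my_integrable_quad {b : ℝ} (hb : 0 < b) (c : ℝ) :
    Integrable (fun x : ℝ => Real.exp (-b * x ^ 2 + c * x)) := by
  have h1 : Integrable (fun x : ℝ => Real.exp (-b * (x - c / (2 * b)) ^ 2)) :=
    (integrable_exp_neg_mul_sq hb).comp_sub_right _
  have h2 := h1.const_mul (Real.exp (c ^ 2 / (4 * b)))
  refine h2.congr (Filter.Eventually.of_forall fun x => ?_)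
  show Real.exp (c ^ 2 / (4 * b)) * Real.exp (-b * (x - c / (2 * b)) ^ 2)
      = Real.exp (-b * x ^ 2 + c * x)
  rw [← Real.exp_add]
  congr 1
  field_simp
  ring

lemma my_integrable_kernel (ν ζ : ℝ) (hζ : 0 < ζ) :
    Integrable (fun x : ℝ => Real.exp (ν * x) * Real.exp (-Real.cosh x / ζ)) := by
  have hb : (0 : ℝ) < 1 / (8 * ζ) := by positivity
  refine (my_integrable_quad hb ν).mono' ?_ ?_
  · exact (Continuous.mul (by fun_prop) (by fun_prop)).aestronglyMeasurable
  · refine Filter.Eventually.of_forall fun x => ?_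
    rw [Real.norm_eq_abs, abs_of_pos (by positivity), ← Real.exp_add]
    apply Real.exp_le_exp.2
    have h1 : x ^ 2 / 8 / ζ ≤ Real.cosh x / ζ :=
      div_le_div_of_nonneg_right (my_sq_le_cosh x) hζ.le
    have h2 : x ^ 2 / 8 / ζ = 1 / (8 * ζ) * x ^ 2 := by
      field_simp
    have h3 : -Real.cosh x / ζ ≤ -(1 / (8 * ζ)) * x ^ 2 := by
      rw [neg_div, neg_mul, neg_le_neg_iff, ← h2]; exact h1
    linarith

lemma my_iic_strictMono {g : ℝ → ℝ} (hg : Integrable g) (hc : Continuous g)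
    (hpos : ∀ x, 0 < g x) : StrictMono (fun c => ∫ x in Iic c, g x) := by
  intro a b hab
  have h := intervalIntegral.integral_Iic_sub_Iic (μ := volume)
    hg.integrableOn hg.integrableOn (a := a) (b := b)
  have hpos' : 0 < ∫ x in a..b, g x :=
    intervalIntegral.intervalIntegral_pos_of_pos (hc.intervalIntegrable a b) hpos hab
  simp only
  linarith

lemma my_refl_int (ν ζ a : ℝ) :
    (∫ x in Iic a, Real.exp (ν * x) * Real.exp (-Real.cosh x / ζ))
      = ∫ x in Ici (-a), Real.exp (-ν * x) * Real.exp (-Real.cosh x / ζ) := by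
  rw [integral_Ici_eq_integral_Ioi,
    ← integral_comp_neg_Iic a (fun x => Real.exp (-ν * x) * Real.exp (-Real.cosh x / ζ))]
  refine setIntegral_congr_fun measurableSet_Iic fun x _ => ?_
  simp [Real.cosh_neg, neg_mul, mul_neg, neg_neg]

lemma my_k_invol (k : ℝ → ℝ × ℝ → ℝ)
    (hk : ∀ ν : ℝ, ∀ ξ ζ : ℝ, 0 < ζ →
      (∫ x in Iic (k ν (ξ, ζ)), Real.exp (ν * x) * Real.exp (-Real.cosh x / ζ)) =
        ∫ x in Ici ξ, Real.exp (ν * x) * Real.exp (-Real.cosh x / ζ))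
    (μ ξ ζ : ℝ) (hζ : 0 < ζ) :
    k μ (-(k (-μ) (ξ, ζ)), ζ) = -ξ := by
  set a := k (-μ) (ξ, ζ) with ha
  have h1 := hk (-μ) ξ ζ hζ
  have h2 := hk μ (-a) ζ hζ
  -- reflection of h1's LHS
  have r1 : (∫ x in Iic a, Real.exp (-μ * x) * Real.exp (-Real.cosh x / ζ))
      = ∫ x in Ici (-a), Real.exp (μ * x) * Real.exp (-Real.cosh x / ζ) := by
    simpa using my_refl_int (-μ) ζ a
  have r2 : (∫ x in Iic (-ξ), Real.exp (μ * x) * Real.exp (-Real.cosh x / ζ))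
      = ∫ x in Ici ξ, Real.exp (-μ * x) * Real.exp (-Real.cosh x / ζ) := by
    simpa using my_refl_int μ ζ (-ξ)
  have key : (∫ x in Iic (k μ (-a, ζ)), Real.exp (μ * x) * Real.exp (-Real.cosh x / ζ))
      = ∫ x in Iic (-ξ), Real.exp (μ * x) * Real.exp (-Real.cosh x / ζ) := by
    rw [h2, ← r1, h1, ← r2]
  exact (my_iic_strictMono (my_integrable_kernel μ ζ hζ)
    (Continuous.mul (by fun_prop) (by fun_prop)) (fun x => by positivity)).injective key


section analytic

variable {t : ℝ} {φ : ℝ → ℝ}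

lemma my_f_contOn (hφ : ContinuousOn φ (Icc 0 t)) :
    ContinuousOn (fun u => Real.exp (2 * φ u)) (Icc 0 t) :=
  Real.continuous_exp.comp_continuousOn (continuousOn_const.mul hφ)

lemma my_f_intble (hφ : ContinuousOn φ (Icc 0 t)) {a b : ℝ} (ha : a ∈ Icc 0 t)
    (hb : b ∈ Icc 0 t) :
    IntervalIntegrable (fun u => Real.exp (2 * φ u)) volume a b :=
  ((my_f_contOn hφ).mono (uIcc_subset_Icc ha hb)).intervalIntegrable

lemma my_pA_contOn (ht : 0 < t) (hφ : ContinuousOn φ (Icc 0 t)) :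
    ContinuousOn (pA φ) (Icc 0 t) := by
  have := intervalIntegral.continuousOn_primitive_interval
    (f := fun u => Real.exp (2 * φ u)) (μ := volume) (a := (0:ℝ)) (b := t) ?_
  · rwa [uIcc_of_le ht.le] at this
  · rw [uIcc_of_le ht.le]
    exact (my_f_contOn hφ).integrableOn_compact isCompact_Icc

lemma my_pA_pos (ht : 0 < t) (hφ : ContinuousOn φ (Icc 0 t)) : 0 < pA φ t :=
  intervalIntegral.intervalIntegral_pos_of_pos
    (my_f_intble hφ (left_mem_Icc.2 ht.le) (right_mem_Icc.2 ht.le))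
    (fun x => Real.exp_pos _) ht

lemma my_pA_nonneg (ht : 0 < t) (hφ : ContinuousOn φ (Icc 0 t)) {s : ℝ} (hs : s ∈ Icc 0 t) :
    0 ≤ pA φ s :=
  intervalIntegral.integral_nonneg hs.1 (fun u _ => (Real.exp_pos _).le)

lemma my_pA_le (ht : 0 < t) (hφ : ContinuousOn φ (Icc 0 t)) {s : ℝ} (hs : s ∈ Icc 0 t) :
    pA φ s ≤ pA φ t := by
  have h := intervalIntegral.integral_add_adjacent_intervals
    (my_f_intble hφ (left_mem_Icc.2 ht.le) hs)
    (my_f_intble hφ hs (right_mem_Icc.2 ht.le))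
  have h2 : 0 ≤ ∫ u in s..t, Real.exp (2 * φ u) :=
    intervalIntegral.integral_nonneg hs.2 (fun u _ => (Real.exp_pos _).le)
  show (∫ u in (0:ℝ)..s, Real.exp (2 * φ u)) ≤ ∫ u in (0:ℝ)..t, Real.exp (2 * φ u)
  linarith [h]

lemma my_pD_pos (ht : 0 < t) (hφ : ContinuousOn φ (Icc 0 t)) (z : ℝ) {s : ℝ}
    (hs : s ∈ Icc 0 t) : 0 < 1 + pA φ s / pA φ t * (Real.exp z - 1) := by
  have hAt := my_pA_pos ht hφ
  have h0 := my_pA_nonneg ht hφ hs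
  have h1 := my_pA_le ht hφ hs
  have hr0 : 0 ≤ pA φ s / pA φ t := div_nonneg h0 hAt.le
  have hr1 : pA φ s / pA φ t ≤ 1 := (div_le_one hAt).2 h1
  rcases le_total (Real.exp z) 1 with h | h
  · nlinarith [Real.exp_pos z]
  · nlinarith

end analytic


lemma my_pA_pT (t : ℝ) (ht : 0 < t) (φ : ℝ → ℝ) (hφ : ContinuousOn φ (Icc 0 t)) (z : ℝ)
    {s : ℝ} (hs : s ∈ Icc 0 t) :
    pA (pT t z φ) s = pA φ s / (1 + pA φ s / pA φ t * (Real.exp z - 1)) := by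
  set c := Real.exp z - 1 with hc
  set A := pA φ with hA
  have hAt : 0 < A t := my_pA_pos ht hφ
  have hAc : ContinuousOn A (Icc 0 t) := my_pA_contOn ht hφ
  set f : ℝ → ℝ := fun u => Real.exp (2 * φ u) with hf
  set E : ℝ → ℝ := fun u => A t + A u * c with hE
  have hDpos : ∀ u ∈ Icc 0 t, 0 < 1 + A u / A t * c := fun u hu => my_pD_pos ht hφ z hu
  have hEpos : ∀ u ∈ Icc 0 t, 0 < E u := by
    intro u hu
    have h := hDpos u hu
    have : E u = A t * (1 + A u / A t * c) := by field_simp [hE]; rfl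
    rw [this]; positivity
  set G : ℝ → ℝ := fun u => A t * A u / E u with hG
  have hsub : Icc 0 s ⊆ Icc 0 t := Icc_subset_Icc le_rfl hs.2
  -- step 1 : rewrite the integrand
  have step1 : pA (pT t z φ) s = ∫ u in (0:ℝ)..s, f u / (E u / A t) ^ 2 := by
    refine intervalIntegral.integral_congr fun u hu => ?_
    rw [uIcc_of_le hs.1] at hu
    have hu' : u ∈ Icc 0 t := hsub hu
    have hD := hDpos u hu'
    show Real.exp (2 * (φ u - Real.log (1 + A u / A t * c))) = f u / (E u / A t) ^ 2
    have hEq : E u / A t = 1 + A u / A t * c := by field_simp [hE]; rfl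
    rw [hEq, mul_sub, Real.exp_sub, show (2:ℝ) * Real.log (1 + A u / A t * c)
        = Real.log ((1 + A u / A t * c) ^ 2) by rw [Real.log_pow]; push_cast; ring,
      Real.exp_log (by positivity)]
  rw [step1]
  -- step 2 : FTC
  have hcontG : ContinuousOn G (Icc 0 s) := by
    refine ContinuousOn.div (continuousOn_const.mul (hAc.mono hsub)) ?_ ?_
    · exact continuousOn_const.add ((hAc.mono hsub).mul continuousOn_const)
    · exact fun u hu => (hEpos u (hsub hu)).ne'
  have hderiv : ∀ x ∈ Ioo 0 s, HasDerivWithinAt G (f x / (E x / A t) ^ 2) (Ioi x) x := by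
    intro x hx
    have hx' : x ∈ Icc 0 t := hsub (Ioo_subset_Icc_self hx)
    have hxint : x ∈ Ioo 0 t := ⟨hx.1, lt_of_lt_of_le hx.2 hs.2⟩
    have hnhds : Icc (0:ℝ) 0 ∪ Icc 0 t ∈ nhds x := by
      refine Filter.mem_of_superset (Icc_mem_nhds hxint.1 hxint.2) subset_union_right
    have hnhds' : Icc (0:ℝ) t ∈ nhds x := Icc_mem_nhds hxint.1 hxint.2
    have hfca : ContinuousAt f x := (my_f_contOn hφ).continuousAt hnhds'
    have hmeas : StronglyMeasurableAtFilter f (nhds x) :=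
      ⟨Icc 0 t, hnhds', ((my_f_contOn hφ).aestronglyMeasurable measurableSet_Icc)⟩
    have hA' : HasDerivAt A (f x) x :=
      intervalIntegral.integral_hasDerivAt_right
        (my_f_intble hφ (left_mem_Icc.2 ht.le) hx') hmeas hfca
    have hE' : HasDerivAt E (f x * c) x := ((hA'.mul_const c).const_add (A t))
    have hEx : E x ≠ 0 := (hEpos x hx').ne'
    have hG' : HasDerivAt G ((A t * f x * E x - A t * A x * (f x * c)) / E x ^ 2) x :=
      (hA'.const_mul (A t)).div hE' hEx
    have heq : (A t * f x * E x - A t * A x * (f x * c)) / E x ^ 2 = f x / (E x / A t) ^ 2 := by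
      rw [hE]
      field_simp
      ring
    rw [heq] at hG'
    exact hG'.hasDerivWithinAt
  have hint : IntervalIntegrable (fun u => f u / (E u / A t) ^ 2) volume 0 s := by
    apply ContinuousOn.intervalIntegrable
    rw [uIcc_of_le hs.1]
    refine ContinuousOn.div ((my_f_contOn hφ).mono hsub) ?_ ?_
    · exact (ContinuousOn.div ((continuousOn_const.add ((hAc.mono hsub).mul
        continuousOn_const))) continuousOn_const (fun u _ => hAt.ne')).pow 2
    · intro u hu
      have := hEpos u (hsub hu)
      positivity
  have step2 := intervalIntegral.integral_eq_sub_of_hasDeriv_right_of_le hs.1 hcontG hderiv hint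
  rw [step2]
  have hG0 : G 0 = 0 := by
    have hA0 : A 0 = 0 := intervalIntegral.integral_same
    simp [hG, hA0]
  rw [hG0, sub_zero, hG]
  have h1 : 1 + A s / A t * c = E s / A t := by field_simp [hE]; rfl
  rw [h1, div_div_eq_mul_div, mul_comm]

lemma my_alg (As At e : ℝ) (hAt : At ≠ 0) (he : e ≠ 0)
    (hD : 1 + As / At * (e - 1) ≠ 0) :
    1 + (As / (1 + As / At * (e - 1))) / (At / e) * (e⁻¹ - 1)
      = (1 + As / At * (e - 1))⁻¹ := by
  have hDD : (1 + As / At * (e - 1)) = (At + As * (e - 1)) / At := by field_simp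
  rw [hDD] at hD ⊢
  have hN : At + As * (e - 1) ≠ 0 := (div_ne_zero_iff.mp hD).1
  field_simp
  ring

/-- Fix `μ ∈ ℝ` and let `k_μ` be defined, for each `ζ > 0`, by
`∫_{-∞}^{k_μ(ξ,ζ)} e^{μx} e^{-cosh x/ζ} dx = ∫_ξ^∞ e^{μx} e^{-cosh x/ζ} dx`, and let
`S_μ(φ)(s) = T_{φ_t + k_μ(φ_t, Z_t(φ))}(φ)(s)`.  Then `S_μ ∘ S_{-μ} = Id` on
`C([0,t];ℝ)`. -/
theorem S_comp_S_neg (t : ℝ) (ht : 0 < t) (μ : ℝ)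
    (k : ℝ → ℝ × ℝ → ℝ)
    (hk : ∀ ν : ℝ, ∀ ξ ζ : ℝ, 0 < ζ →
      (∫ x in Iic (k ν (ξ, ζ)), Real.exp (ν * x) * Real.exp (-Real.cosh x / ζ)) =
        ∫ x in Ici ξ, Real.exp (ν * x) * Real.exp (-Real.cosh x / ζ))
    (S : ℝ → (ℝ → ℝ) → (ℝ → ℝ))
    (hS : ∀ ν : ℝ, ∀ φ : ℝ → ℝ, S ν φ = pT t (φ t + k ν (φ t, pZ φ t)) φ) :
    ∀ φ : ℝ → ℝ, ContinuousOn φ (Icc 0 t) →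
      ∀ s ∈ Icc (0:ℝ) t, S μ (S (-μ) φ) s = φ s := by
  intro φ hφ s hs
  have hAt : 0 < pA φ t := my_pA_pos ht hφ
  set ζ := pZ φ t with hzeta
  have hζ : 0 < ζ := mul_pos (Real.exp_pos _) hAt
  set ξ := φ t with hxi
  set a := k (-μ) (ξ, ζ) with haa
  set z := ξ + a with hz
  have hSφ : S (-μ) φ = pT t z φ := by rw [hS]
  rw [hSφ]
  set ψ := pT t z φ with hψ
  have hDt : 1 + pA φ t / pA φ t * (Real.exp z - 1) = Real.exp z := by
    rw [div_self hAt.ne']; ring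
  have hψt : ψ t = ξ - z := by
    show φ t - Real.log _ = ξ - z
    rw [hDt, Real.log_exp, hxi]
  have hAψs : pA ψ s = pA φ s / (1 + pA φ s / pA φ t * (Real.exp z - 1)) :=
    my_pA_pT t ht φ hφ z hs
  have hAψt : pA ψ t = pA φ t / Real.exp z := by
    rw [my_pA_pT t ht φ hφ z (right_mem_Icc.2 ht.le), hDt]
  have hψcont : ContinuousOn ψ (Icc 0 t) := by
    refine hφ.sub (Real.continuousOn_log.comp ?_ ?_)
    · exact continuousOn_const.add
        (((my_pA_contOn ht hφ).div continuousOn_const fun u _ => hAt.ne').mul continuousOn_const)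
    · exact fun u hu => (my_pD_pos ht hφ z hu).ne'
  have hZψ : pZ ψ t = ζ := by
    show Real.exp (-(ψ t)) * pA ψ t = ζ
    rw [hψt, hAψt, hzeta, show -(ξ - z) = z + -ξ by ring, Real.exp_add]
    show _ = Real.exp (-(φ t)) * pA φ t
    field_simp
    ring
  have hk2 : k μ (ψ t, pZ ψ t) = -ξ := by
    rw [hZψ, hψt, show ξ - z = -a by rw [hz]; ring]
    exact my_k_invol k hk μ ξ ζ hζ
  rw [hS]
  rw [hk2, hψt, show ξ - z + -ξ = -z by ring]
  have hDs : 0 < 1 + pA φ s / pA φ t * (Real.exp z - 1) := my_pD_pos ht hφ z hs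
  show ψ s - Real.log (1 + pA ψ s / pA ψ t * (Real.exp (-z) - 1)) = φ s
  have hX : 1 + pA ψ s / pA ψ t * (Real.exp (-z) - 1)
      = (1 + pA φ s / pA φ t * (Real.exp z - 1))⁻¹ := by
    rw [hAψs, hAψt, Real.exp_neg]
    exact my_alg _ _ _ hAt.ne' (Real.exp_pos z).ne' hDs.ne'
  rw [hX, Real.log_inv]
  show φ s - Real.log (1 + pA φ s / pA φ t * (Real.exp z - 1)) - -Real.log _ = φ s
  ring
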